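/- Let q = 2^n, m ≡ 0 (mod 4) with m ≥ 8, d = (m-2)/2, f ∈ 𝔽_q[x] of degree m with nonzero coefficient of x^(m-1), and α ∈ 𝔽_q*. Then (L_α f)' has (d-1)/2 distinct roots in an algebraic closure of 𝔽_2 if and only if (D_α f)' has d-1 distinct roots there. -/

import Mathlib

open Polynomial

theorem roots_correspondence (n m : ℕ) (hn : 0 < n) (hm : 8 ≤ m) (hm4 : m % 4 = 0)
    (d : ℕ) (hd : d = (m - 2) / 2)
    (f : Polynomial (GaloisField 2 n)) (hf : f.natDegree = m)
    (ha1 : f.coeff (m - 1) ≠ 0)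
    (α : GaloisField 2 n) (hα : α ≠ 0)
    (L : Polynomial (GaloisField 2 n)) (hdeg : L.natDegree ≤ d)
    (hcomp : L.comp (X * (X + C α)) = f.comp (X + C α) + f) :
    Set.ncard {z : AlgebraicClosure (GaloisField 2 n) |
        aeval z (derivative L) = 0} = (d - 1) / 2 ↔
      Set.ncard {z : AlgebraicClosure (GaloisField 2 n) |
        aeval z (derivative (f.comp (X + C α) + f)) = 0} = d - 1 := by
  have h2K : (2 : GaloisField 2 n) = 0 := by
    have := CharP.cast_eq_zero (GaloisField 2 n) 2
    exact_mod_cast this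
  have h2 : (2 : AlgebraicClosure (GaloisField 2 n)) = 0 := by
    rw [← map_ofNat (algebraMap (GaloisField 2 n) (AlgebraicClosure (GaloisField 2 n))) 2,
      h2K, map_zero]
  set β := (algebraMap (GaloisField 2 n) (AlgebraicClosure (GaloisField 2 n))) α with hβdef
  have hβ : β ≠ 0 := by
    simpa [hβdef] using
      (map_ne_zero_iff _ (algebraMap (GaloisField 2 n)
        (AlgebraicClosure (GaloisField 2 n))).injective).mpr hα
  have h2P : (2 : Polynomial (GaloisField 2 n)) = 0 := by
    rw [← map_ofNat (C : GaloisField 2 n →+* Polynomial (GaloisField 2 n)) 2, h2K, map_zero]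
  have hq : derivative (X * (X + C α)) = C α := by
    simp only [derivative_mul, derivative_X, derivative_add, derivative_C, one_mul, add_zero,
      mul_one]
    linear_combination X * h2P
  have hset : {z : AlgebraicClosure (GaloisField 2 n) |
      aeval z (derivative (f.comp (X + C α) + f)) = 0}
      = {z : AlgebraicClosure (GaloisField 2 n) |
      aeval (z * (z + β)) (derivative L) = 0} := by
    ext z
    simp only [Set.mem_setOf_eq, ← hcomp, derivative_comp, hq]
    rw [map_mul, aeval_C, aeval_comp]
    simp [hβ, mul_eq_zero, hβdef, hα]
  rw [hset]
  have hex : ∀ τ : AlgebraicClosure (GaloisField 2 n),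
      ∃ z : AlgebraicClosure (GaloisField 2 n), z * (z + β) = τ := by
    intro τ
    have hdeg2 : (X ^ 2 + C β * X - C τ).degree = 2 := by compute_degree!
    obtain ⟨z, hz⟩ := IsAlgClosed.exists_root (X ^ 2 + C β * X - C τ)
      (by rw [hdeg2]; norm_num)
    refine ⟨z, ?_⟩
    have hz' : z ^ 2 + β * z - τ = 0 := by
      simpa [IsRoot] using hz
    linear_combination hz'
  choose r hr using hex
  have hfib : ∀ (τ : AlgebraicClosure (GaloisField 2 n)) (b : Bool),
      (r τ + (if b then β else 0)) * ((r τ + (if b then β else 0)) + β) = τ := by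
    intro τ b
    cases b
    · simpa using hr τ
    · simp only [if_pos]
      linear_combination hr τ + β * (r τ + β) * h2
  set S : Set (AlgebraicClosure (GaloisField 2 n)) :=
    {z | aeval z (derivative L) = 0} with hS
  set A : Set (AlgebraicClosure (GaloisField 2 n)) :=
    {z | aeval (z * (z + β)) (derivative L) = 0} with hA
  have hmem : ∀ (p : ↥S × Bool), (r p.1.1 + (if p.2 then β else 0)) ∈ A := by
    rintro ⟨⟨τ, hτ⟩, b⟩
    show aeval _ (derivative L) = 0
    rw [hfib τ b]
    exact hτ
  have key : A.ncard = 2 * S.ncard := by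
    let g : ↥S × Bool → ↥A := fun p => ⟨_, hmem p⟩
    have hbij : Function.Bijective g := by
      constructor
      · rintro ⟨⟨τ, hτ⟩, b⟩ ⟨⟨τ', hτ'⟩, b'⟩ hgg
        have hv : r τ + (if b then β else 0) = r τ' + (if b' then β else 0) :=
          congrArg Subtype.val hgg
        have hττ' : τ = τ' := by rw [← hfib τ b, ← hfib τ' b', hv]
        subst hττ'
        have hbb : (if b then β else 0 :
            AlgebraicClosure (GaloisField 2 n)) = (if b' then β else 0) :=
          add_left_cancel hv
        cases b <;> cases b' <;> simp_all
      · rintro ⟨z, hz⟩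
        have hτS : z * (z + β) ∈ S := hz
        have hzero : (z + r (z * (z + β))) * (z + r (z * (z + β)) + β) = 0 := by
          linear_combination hr (z * (z + β)) +
            (z ^ 2 + z * r (z * (z + β)) + β * z) * h2
        rcases mul_eq_zero.mp hzero with h | h
        · refine ⟨⟨⟨_, hτS⟩, false⟩, ?_⟩
          apply Subtype.ext
          show r (z * (z + β)) + (if false then β else 0) = z
          simp only [if_neg Bool.false_ne_true, add_zero]
          linear_combination h - z * h2
        · refine ⟨⟨⟨_, hτS⟩, true⟩, ?_⟩
          apply Subtype.ext
          show r (z * (z + β)) + (if true then β else 0) = z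
          simp only [if_pos]
          linear_combination h - z * h2
    have hcard : Nat.card (↥S × Bool) = Nat.card ↥A := Nat.card_eq_of_bijective g hbij
    rw [Nat.card_prod] at hcard
    rw [← Nat.card_coe_set_eq, ← Nat.card_coe_set_eq, ← hcard]
    simp [Nat.card_eq_fintype_card, mul_comm]
  rw [key]
  set k := S.ncard with hk
  omega
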